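/- Let π be a permutation of [2n] violating the nesting condition: there exist e, f such that exactly one of π(f), π(f̄) lies in the interval [π(e), π(ē)]. Then for any F ⊆ [2n], there exists an almost-complementary set C of size n+1 containing {e, ē} and exactly one of g, ḡ for each other complementary pair, such that the alternating-sign assignment along π (with F-flips) gives e and ē opposite signs. -/

import Mathlib

/-- The complementary element: `ī = i + n` modulo `2n`. -/
def bar (n : ℕ) (e : Fin (2 * n)) : Fin (2 * n) :=
  ⟨(e.val + n) % (2 * n), Nat.mod_lt _ (by have := e.isLt; omega)⟩



lemma bar_val (n : ℕ) (g : Fin (2 * n)) :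
    (bar n g).val = if g.val < n then g.val + n else g.val - n := by
  have hg := g.isLt
  simp only [bar]
  split
  · exact Nat.mod_eq_of_lt (by omega)
  · rw [Nat.mod_eq_sub_mod (by omega)]
    have h : g.val + n - 2*n = g.val - n := by omega
    rw [h, Nat.mod_eq_of_lt (by omega)]

lemma bar_bar (n : ℕ) (g : Fin (2 * n)) : bar n (bar n g) = g := by
  have hg := g.isLt
  apply Fin.ext
  rw [bar_val, bar_val]
  split_ifs <;> omega

lemma bar_ne (n : ℕ) (g : Fin (2 * n)) : bar n g ≠ g := by
  have hg := g.isLt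
  intro h
  have := congrArg Fin.val h
  rw [bar_val] at this
  split_ifs at this <;> omega

def emb (n : ℕ) : Fin n ↪ Fin (2 * n) where
  toFun i := ⟨i.val, by omega⟩
  inj' a b h := by
    apply Fin.ext
    have : (⟨a.val, by omega⟩ : Fin (2*n)).val = (⟨b.val, by omega⟩ : Fin (2*n)).val :=
      congrArg Fin.val h
    exact this

lemma card_L (n : ℕ) : (Finset.univ.filter (fun g : Fin (2*n) => g.val < n)).card = n := by
  have : (Finset.univ.filter (fun g : Fin (2*n) => g.val < n)) =
      Finset.map (emb n) Finset.univ := by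
    ext g
    simp [emb, Fin.ext_iff]
    constructor
    · intro h; exact ⟨⟨g.val, h⟩, rfl⟩
    · rintro ⟨i, hi⟩; rw [← hi]; exact i.isLt
  rw [this, Finset.card_map, Finset.card_univ, Fintype.card_fin]


/-- the representative of the pair `{g, ḡ}` with value `< n` -/
def lo (n : ℕ) (g : Fin (2 * n)) : Fin (2 * n) :=
  if g.val < n then g else bar n g

lemma lo_val (n : ℕ) (g : Fin (2 * n)) : (lo n g).val < n := by
  have hg := g.isLt
  have hn : 0 < n := by omega
  rw [lo]; split_ifs with h
  · exact h
  · rw [bar_val]; split_ifs <;> omega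

lemma lo_mem (n : ℕ) (g : Fin (2 * n)) : lo n g = g ∨ lo n g = bar n g := by
  rw [lo]; split_ifs <;> simp

lemma lo_bar (n : ℕ) (g : Fin (2 * n)) : lo n (bar n g) = lo n g := by
  have hg := g.isLt
  by_cases h : g.val < n
  · have hbv : (bar n g).val = g.val + n := by rw [bar_val, if_pos h]
    rw [lo, lo, if_pos h, if_neg (by omega), bar_bar]
  · have hbv : (bar n g).val = g.val - n := by rw [bar_val, if_neg h]
    have hlt : (bar n g).val < n := by omega
    rw [lo, lo, if_pos hlt, if_neg h]

/-- if `lo g = lo g'` then the pairs coincide -/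
lemma lo_inj (n : ℕ) (g g' : Fin (2 * n)) (h : lo n g = lo n g') : g = g' ∨ g = bar n g' := by
  rcases lo_mem n g with h1 | h1 <;> rcases lo_mem n g' with h2 | h2
  · left; rw [← h1, h, h2]
  · right; rw [← h1, h, h2]
  · right
    have hgg : bar n g = g' := by rw [← h1, h, h2]
    rw [← hgg, bar_bar]
  · left
    have hgg : bar n g = bar n g' := by rw [← h1, h, h2]
    have := congrArg (bar n) hgg
    rwa [bar_bar, bar_bar] at this

lemma lo_of_mem_pair (n : ℕ) (f x : Fin (2 * n)) (hx : x = f ∨ x = bar n f)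
    (hxn : x.val < n) : x = lo n f := by
  rcases hx with rfl | rfl
  · rw [lo, if_pos hxn]
  · rw [← lo_bar, lo, if_pos hxn]

def Dset (n : ℕ) (e f : Fin (2 * n)) : Finset (Fin (2 * n)) :=
  (((Finset.univ.filter (fun g : Fin (2*n) => g.val < n)).erase (lo n e)).erase (lo n f))
    ∪ {e, bar n e}

lemma mem_Dset (n : ℕ) (e f g : Fin (2 * n)) :
    g ∈ Dset n e f ↔ (g.val < n ∧ g ≠ lo n e ∧ g ≠ lo n f) ∨ g = e ∨ g = bar n e := by
  simp [Dset, Finset.mem_union, Finset.mem_erase, Finset.mem_filter]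
  tauto

lemma card_Dset (n : ℕ) (e f : Fin (2 * n)) (hfe : f ≠ e) (hfe' : f ≠ bar n e) :
    (Dset n e f).card = n := by
  have he := e.isLt
  have hlofe : lo n f ≠ lo n e := by
    intro h
    rcases lo_inj n f e h with h' | h' <;> [exact hfe h'; exact hfe' h']
  have hn2 : 2 ≤ n := by
    -- e, bar e, f, bar f are four distinct elements of Fin (2n)
    by_contra hc
    push_neg at hc
    interval_cases n
    · omega
    · -- n = 1 : Fin 2, pairs {0,1} only one pair, so f ∈ {e, bar e}
      have hf := f.isLt
      have hbe := (bar 1 e).isLt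
      have h1 : (bar 1 e).val = if e.val < 1 then e.val + 1 else e.val - 1 := bar_val 1 e
      have h2 : f.val ≠ e.val := fun hh => hfe (Fin.ext hh)
      have h3 : f.val ≠ (bar 1 e).val := fun hh => hfe' (Fin.ext hh)
      split_ifs at h1 <;> omega
  have hdisj : Disjoint
      (((Finset.univ.filter (fun g : Fin (2*n) => g.val < n)).erase (lo n e)).erase (lo n f))
      ({e, bar n e} : Finset (Fin (2*n))) := by
    rw [Finset.disjoint_right]
    intro a ha ha'
    simp only [Finset.mem_insert, Finset.mem_singleton] at ha
    simp only [Finset.mem_erase, Finset.mem_filter, Finset.mem_univ, true_and] at ha'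
    exact ha'.2.1 (lo_of_mem_pair n e a ha ha'.2.2)
  rw [Dset, Finset.card_union_of_disjoint hdisj]
  rw [Finset.card_erase_of_mem, Finset.card_erase_of_mem, card_L]
  · have : ({e, bar n e} : Finset (Fin (2*n))).card = 2 := by
      rw [Finset.card_insert_of_notMem (by simp [(bar_ne n e).symm, Ne, eq_comm]), Finset.card_singleton]
    omega
  · simp [Finset.mem_filter, lo_val]
  · simp only [Finset.mem_erase, Finset.mem_filter, Finset.mem_univ, true_and]
    exact ⟨hlofe, lo_val n f⟩

lemma not_mem_Dset (n : ℕ) (e f c : Fin (2 * n)) (hfe : f ≠ e) (hfe' : f ≠ bar n e)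
    (hc : c = f ∨ c = bar n f) : c ∉ Dset n e f := by
  intro hmem
  rw [mem_Dset] at hmem
  rcases hmem with ⟨h1, _, h3⟩ | h | h
  · exact h3 (lo_of_mem_pair n f c hc h1)
  · rcases hc with rfl | rfl
    · exact hfe h
    · exact hfe' (by rw [← bar_bar n f, h])
  · rcases hc with rfl | rfl
    · exact hfe' h
    · exact hfe (by have := congrArg (bar n) h; rwa [bar_bar, bar_bar] at this)

lemma struct (n : ℕ) (e f c : Fin (2 * n)) (hfe : f ≠ e) (hfe' : f ≠ bar n e)
    (hc : c = f ∨ c = bar n f) :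
    (insert c (Dset n e f)).card = n + 1 ∧ e ∈ insert c (Dset n e f) ∧
      bar n e ∈ insert c (Dset n e f) ∧
      (∀ g, g ≠ e → g ≠ bar n e →
        ¬ (g ∈ insert c (Dset n e f) ∧ bar n g ∈ insert c (Dset n e f))) := by
  have hcD := not_mem_Dset n e f c hfe hfe' hc
  refine ⟨?_, ?_, ?_, ?_⟩
  · rw [Finset.card_insert_of_notMem hcD, card_Dset n e f hfe hfe']
  · exact Finset.mem_insert_of_mem ((mem_Dset n e f e).mpr (Or.inr (Or.inl rfl)))
  · exact Finset.mem_insert_of_mem ((mem_Dset n e f (bar n e)).mpr (Or.inr (Or.inr rfl)))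
  · intro g hge hgbe ⟨h1, h2⟩
    have hbge : bar n g ≠ e := fun h => hgbe (by rw [← bar_bar n g, h])
    have hbgbe : bar n g ≠ bar n e := fun h => hge (by
      have := congrArg (bar n) h; rwa [bar_bar, bar_bar] at this)
    rw [Finset.mem_insert] at h1 h2
    rcases h1 with rfl | h1 <;> rcases h2 with h2 | h2
    · exact bar_ne n g h2
    · -- g = c, bar g ∈ Dset
      rw [mem_Dset] at h2
      rcases h2 with ⟨hv, _, h3⟩ | h | h
      · refine h3 (lo_of_mem_pair n f (bar n g) ?_ hv)
        rcases hc with rfl | rfl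
        · right; rfl
        · left; exact bar_bar n f
      · exact hbge h
      · exact hbgbe h
    · -- bar g = c, g ∈ Dset
      rw [mem_Dset] at h1
      rcases h1 with ⟨hv, _, h3⟩ | h | h
      · refine h3 (lo_of_mem_pair n f g ?_ hv)
        rcases hc with rfl | rfl
        · right; rw [← h2, bar_bar]
        · left; rw [← bar_bar n f, ← h2, bar_bar]
      · exact hge h
      · exact hgbe h
    · -- both in Dset
      rw [mem_Dset] at h1 h2
      have hgv := g.isLt
      rcases h1 with ⟨hv1, _, _⟩ | h | h
      · rcases h2 with ⟨hv2, _, _⟩ | h | h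
        · rw [bar_val] at hv2; split_ifs at hv2 <;> omega
        · exact hbge h
        · exact hbgbe h
      · exact hge h
      · exact hgbe h

lemma covers (n : ℕ) (e f c : Fin (2 * n)) (hfe : f ≠ e) (hfe' : f ≠ bar n e)
    (hc : c = f ∨ c = bar n f) (g : Fin (2 * n)) :
    g ∈ insert c (Dset n e f) ∨ bar n g ∈ insert c (Dset n e f) := by
  by_cases hge : g = e
  · subst hge; exact Or.inl (Finset.mem_insert_of_mem ((mem_Dset _ _ _ _).mpr (Or.inr (Or.inl rfl))))
  by_cases hgbe : g = bar n e
  · subst hgbe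
    exact Or.inl (Finset.mem_insert_of_mem ((mem_Dset n e f _).mpr (Or.inr (Or.inr rfl))))
  by_cases hgf : g = f
  · subst hgf
    rcases hc with rfl | rfl
    · exact Or.inl (Finset.mem_insert_self _ _)
    · exact Or.inr (Finset.mem_insert_self _ _)
  by_cases hgbf : g = bar n f
  · subst hgbf
    rcases hc with rfl | rfl
    · exact Or.inr (by rw [bar_bar]; exact Finset.mem_insert_self _ _)
    · exact Or.inl (Finset.mem_insert_self _ _)
  · have hmem : lo n g ∈ Dset n e f := by
      rw [mem_Dset]
      refine Or.inl ⟨lo_val n g, ?_, ?_⟩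
      · intro h; rcases lo_inj n g e h with h' | h' <;> [exact hge h'; exact hgbe h']
      · intro h; rcases lo_inj n g f h with h' | h' <;> [exact hgf h'; exact hgbf h']
    rcases lo_mem n g with h | h
    · left; rw [← h]; exact Finset.mem_insert_of_mem hmem
    · right; rw [← h]; exact Finset.mem_insert_of_mem hmem

lemma K_insert {α : Type*} [DecidableEq α] (p : α → Prop) [DecidablePred p]
    (c : α) (D : Finset α) (hc : c ∉ D) :
    ((insert c D).filter p).card = (D.filter p).card + (if p c then 1 else 0) := by
  rw [Finset.filter_insert]
  split_ifs
  · rw [Finset.card_insert_of_notMem (fun h => hc (Finset.mem_filter.mp h).1)]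
  · rfl

lemma parity (n : ℕ) (A B X Y : Fin (2 * n)) (hAB : A ≠ B) (hXA : X ≠ A) (hXB : X ≠ B)
    (hYA : Y ≠ A) (hYB : Y ≠ B)
    (hviol : Xor' (X ∈ Set.Icc (min A B) (max A B)) (Y ∈ Set.Icc (min A B) (max A B))) :
    ((if X < A then 1 else 0) + (if X < B then 1 else 0) +
      ((if Y < A then 1 else 0) + (if Y < B then 1 else 0))) % 2 = 1 := by
  have hAB' : A.val ≠ B.val := fun h => hAB (Fin.ext h)
  have hXA' : X.val ≠ A.val := fun h => hXA (Fin.ext h)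
  have hXB' : X.val ≠ B.val := fun h => hXB (Fin.ext h)
  have hYA' : Y.val ≠ A.val := fun h => hYA (Fin.ext h)
  have hYB' : Y.val ≠ B.val := fun h => hYB (Fin.ext h)
  rcases le_total A B with hab | hab <;>
    [rw [min_eq_left hab, max_eq_right hab] at hviol;
     rw [min_eq_right hab, max_eq_left hab] at hviol] <;>
  · rw [Fin.le_def] at hab
    rcases hviol with ⟨h1, h2⟩ | ⟨h1, h2⟩ <;>
    · simp only [Set.mem_Icc, not_and, not_le, Fin.le_def, Fin.lt_def] at h1 h2
      split_ifs with i1 i2 i3 i4 <;> rw [Fin.lt_def] at * <;> omega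

lemma pm_mul (a b : ℤ) (ha : a = 1 ∨ a = -1) (hb : b = 1 ∨ b = -1) :
    a * b = 1 ∨ a * b = -1 := by
  rcases ha with rfl | rfl <;> rcases hb with rfl | rfl <;> norm_num

lemma neg_of_prod (s t : ℤ) (hs : s = 1 ∨ s = -1) (ht : t = 1 ∨ t = -1) (h : s * t = -1) :
    s = -t := by
  rcases hs with rfl | rfl <;> rcases ht with rfl | rfl <;> revert h <;> norm_num

/-- The sign of an element `g` of the almost-complementary set `C`: alternate `+,-,…`
along the `π`-order of `C` and then flip the signs of elements of `F`. -/
def sgn (n : ℕ) (π : Equiv.Perm (Fin (2 * n))) (F C : Finset (Fin (2 * n)))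
    (g : Fin (2 * n)) : ℤ :=
  (if g ∈ F then -1 else 1) * (-1) ^ (C.filter (fun h => π h < π g)).card

/-- If the permutation `π` violates the nesting condition, witnessed by `e, f` with
exactly one of `π f, π f̄` in the interval spanned by `π e` and `π ē`, then for any
sign-flip set `F` there is an almost-complementary set `C` of size `n+1` containing
`{e, ē}` and exactly one element of each other complementary pair, on which the
alternating-sign assignment gives `e` and `ē` opposite signs. -/
theorem stmt19 (n : ℕ) (π : Equiv.Perm (Fin (2 * n))) (e f : Fin (2 * n))
    (hviol : Xor'
      (π f ∈ Set.Icc (min (π e) (π (bar n e))) (max (π e) (π (bar n e))))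
      (π (bar n f) ∈ Set.Icc (min (π e) (π (bar n e))) (max (π e) (π (bar n e))))) :
    ∀ F : Finset (Fin (2 * n)), ∃ C : Finset (Fin (2 * n)),
      C.card = n + 1 ∧ e ∈ C ∧ bar n e ∈ C ∧
      (∀ g, g ≠ e → g ≠ bar n e → ¬ (g ∈ C ∧ bar n g ∈ C)) ∧
      (∀ g, g ∈ C ∨ bar n g ∈ C) ∧
      sgn n π F C e = - sgn n π F C (bar n e) := by
  intro F
  have hmem1 : π e ∈ Set.Icc (min (π e) (π (bar n e))) (max (π e) (π (bar n e))) :=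
    Set.mem_Icc.mpr ⟨min_le_left _ _, le_max_left _ _⟩
  have hmem2 : π (bar n e) ∈ Set.Icc (min (π e) (π (bar n e))) (max (π e) (π (bar n e))) :=
    Set.mem_Icc.mpr ⟨min_le_right _ _, le_max_right _ _⟩
  have hfe : f ≠ e := by
    rintro rfl
    rcases hviol with ⟨_, h2⟩ | ⟨_, h2⟩
    · exact h2 hmem2
    · exact h2 hmem1
  have hfe' : f ≠ bar n e := by
    rintro rfl
    rw [bar_bar] at hviol
    rcases hviol with ⟨_, h2⟩ | ⟨_, h2⟩
    · exact h2 hmem1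
    · exact h2 hmem2
  have hABne : π e ≠ π (bar n e) := fun h => bar_ne n e (π.injective h).symm
  have hXA : π f ≠ π e := fun h => hfe (π.injective h)
  have hXB : π f ≠ π (bar n e) := fun h => hfe' (π.injective h)
  have hYA : π (bar n f) ≠ π e := fun h => hfe' (by
    have h2 := π.injective h
    rw [← bar_bar n f, h2])
  have hYB : π (bar n f) ≠ π (bar n e) := fun h => hfe (by
    have h2 := π.injective h
    have h3 := congrArg (bar n) h2
    rwa [bar_bar, bar_bar] at h3)
  obtain ⟨hcard0, he0, hbe0, hnob0⟩ := struct n e f f hfe hfe' (Or.inl rfl)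
  obtain ⟨hcard1, he1, hbe1, hnob1⟩ := struct n e f (bar n f) hfe hfe' (Or.inr rfl)
  have hcov0 := covers n e f f hfe hfe' (Or.inl rfl)
  have hcov1 := covers n e f (bar n f) hfe hfe' (Or.inr rfl)
  set D := Dset n e f with hD
  have hfD : f ∉ D := not_mem_Dset n e f f hfe hfe' (Or.inl rfl)
  have hbfD : bar n f ∉ D := not_mem_Dset n e f (bar n f) hfe hfe' (Or.inr rfl)
  have hpm : ∀ (C : Finset (Fin (2*n))) (g : Fin (2*n)),
      sgn n π F C g = 1 ∨ sgn n π F C g = -1 := by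
    intro C g
    unfold sgn
    rcases neg_one_pow_eq_or ℤ (C.filter (fun h => π h < π g)).card with h | h <;>
      rw [h] <;> split_ifs <;> norm_num
  have hprod : ∀ C : Finset (Fin (2*n)), sgn n π F C e * sgn n π F C (bar n e) =
      ((if e ∈ F then (-1:ℤ) else 1) * (if bar n e ∈ F then (-1:ℤ) else 1)) *
        (-1) ^ ((C.filter (fun h => π h < π e)).card +
          (C.filter (fun h => π h < π (bar n e))).card) := by
    intro C; unfold sgn; rw [pow_add]; ring
  have h0A : ((insert f D).filter (fun h => π h < π e)).card =
      (D.filter (fun h => π h < π e)).card + (if π f < π e then 1 else 0) :=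
    K_insert _ f D hfD
  have h0B : ((insert f D).filter (fun h => π h < π (bar n e))).card =
      (D.filter (fun h => π h < π (bar n e))).card + (if π f < π (bar n e) then 1 else 0) :=
    K_insert _ f D hfD
  have h1A : ((insert (bar n f) D).filter (fun h => π h < π e)).card =
      (D.filter (fun h => π h < π e)).card + (if π (bar n f) < π e then 1 else 0) :=
    K_insert _ (bar n f) D hbfD
  have h1B : ((insert (bar n f) D).filter (fun h => π h < π (bar n e))).card =
      (D.filter (fun h => π h < π (bar n e))).card +
        (if π (bar n f) < π (bar n e) then 1 else 0) :=
    K_insert _ (bar n f) D hbfD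
  have hε : ((if e ∈ F then (-1:ℤ) else 1) * (if bar n e ∈ F then (-1:ℤ) else 1)) *
      ((if e ∈ F then (-1:ℤ) else 1) * (if bar n e ∈ F then (-1:ℤ) else 1)) = 1 := by
    split_ifs <;> norm_num
  have hparity := parity n (π e) (π (bar n e)) (π f) (π (bar n f)) hABne hXA hXB hYA hYB hviol
  have hodd : Odd ((D.filter (fun h => π h < π e)).card + (if π f < π e then 1 else 0) +
      ((D.filter (fun h => π h < π (bar n e))).card + (if π f < π (bar n e) then 1 else 0)) +
      ((D.filter (fun h => π h < π e)).card + (if π (bar n f) < π e then 1 else 0) +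
      ((D.filter (fun h => π h < π (bar n e))).card +
        (if π (bar n f) < π (bar n e) then 1 else 0)))) := by
    rw [Nat.odd_iff]
    omega
  have hkey : (sgn n π F (insert f D) e * sgn n π F (insert f D) (bar n e)) *
      (sgn n π F (insert (bar n f) D) e * sgn n π F (insert (bar n f) D) (bar n e)) = -1 := by
    rw [hprod (insert f D), hprod (insert (bar n f) D), h0A, h0B, h1A, h1B,
      mul_mul_mul_comm, hε, one_mul, ← pow_add]
    exact Odd.neg_one_pow hodd
  rcases pm_mul _ _ (hpm (insert f D) e) (hpm (insert f D) (bar n e)) with h | h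
  · refine ⟨insert (bar n f) D, hcard1, he1, hbe1, hnob1, hcov1, ?_⟩
    apply neg_of_prod _ _ (hpm _ e) (hpm _ (bar n e))
    rw [h, one_mul] at hkey
    exact hkey
  · refine ⟨insert f D, hcard0, he0, hbe0, hnob0, hcov0, ?_⟩
    exact neg_of_prod _ _ (hpm _ e) (hpm _ (bar n e)) h
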